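/- Let A, B : ℝ → [0,∞) be continuous functions vanishing only at 0, with B(t)/A(t) → 0 as t → 0 and B(t)/A*(t) → 0 as |t| → ∞ for another continuous function A* : ℝ → [0,∞) vanishing only at 0. Suppose (u_k) is a sequence of measurable functions ℝᴺ → ℝ with ∫ A(|u_k|) dx and ∫ A*(|u_k|) dx bounded, and for every ε > 0 the Lebesgue measure of {x : |u_k(x)| > ε} tends to 0 as k → ∞. Then ∫_{ℝᴺ} B(|u_k|) dx → 0. -/

import Mathlib

open MeasureTheory Filter Metric

/-- Non-reflexive Orlicz-type Lions lemma (Alves–Carvalho), measure-theoretic form. -/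
theorem lions_nonreflexive
    (N : ℕ)
    (A Astar B : ℝ → ℝ)
    (hAc : Continuous A) (hAstarc : Continuous Astar) (hBc : Continuous B)
    (hAnn : ∀ t, 0 ≤ A t) (hAstarnn : ∀ t, 0 ≤ Astar t) (hBnn : ∀ t, 0 ≤ B t)
    (hAzero : ∀ t, A t = 0 ↔ t = 0)
    (hAstarzero : ∀ t, Astar t = 0 ↔ t = 0)
    (hBzero : ∀ t, B t = 0 ↔ t = 0)
    (hlim0 : Tendsto (fun t => B t / A t) (nhdsWithin 0 {0}ᶜ) (nhds 0))
    (hliminf : Tendsto (fun t => B t / Astar t) (Filter.comap abs Filter.atTop) (nhds 0))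
    (u : ℕ → EuclideanSpace ℝ (Fin N) → ℝ)
    (hum : ∀ k, Measurable (u k))
    (M₁ M₂ : ℝ)
    (hbd₁ : ∀ k, ∫⁻ x, ENNReal.ofReal (A |u k x|) ≤ ENNReal.ofReal M₁)
    (hbd₂ : ∀ k, ∫⁻ x, ENNReal.ofReal (Astar |u k x|) ≤ ENNReal.ofReal M₂)
    (hmeas : ∀ ε : ℝ, 0 < ε →
      Tendsto (fun k => volume {x | ε < |u k x|}) atTop (nhds 0)) :
    Tendsto (fun k => ∫⁻ x, ENNReal.ofReal (B |u k x|)) atTop (nhds 0) := by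
  rw [ENNReal.tendsto_nhds_zero]
  intro ε hε
  obtain ⟨r, hr0, hrε⟩ : ∃ r : ℝ, 0 < r ∧ ENNReal.ofReal r ≤ ε := by
    rcases eq_or_ne ε ⊤ with h | h
    · exact ⟨1, one_pos, by simp [h]⟩
    · exact ⟨ε.toReal, ENNReal.toReal_pos hε.ne' h, by rw [ENNReal.ofReal_toReal h]⟩
  set M := max M₁ (max M₂ 1) with hM
  have hMpos : 0 < M := lt_of_lt_of_le one_pos (le_max_of_le_right (le_max_right _ _))
  set η := r / (3 * M) with hη
  have hηpos : 0 < η := div_pos hr0 (by positivity)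
  -- small argument bound
  rw [Metric.tendsto_nhdsWithin_nhds] at hlim0
  obtain ⟨δ, hδ0, hδ⟩ := hlim0 η hηpos
  -- large argument bound
  have h1 : ∀ᶠ t in Filter.comap abs Filter.atTop, dist (B t / Astar t) 0 < η :=
    Metric.tendsto_nhds.mp hliminf η hηpos
  rw [Filter.eventually_comap] at h1
  rw [Filter.eventually_atTop] at h1
  obtain ⟨T, hT⟩ := h1
  set T' := max T (max δ 1) with hT'
  have hT'1 : (1:ℝ) ≤ T' := le_max_of_le_right (le_max_right _ _)
  -- bound for B on the compact annulus (in fact on [-T', T'])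
  obtain ⟨C, hC⟩ := (isCompact_Icc (a := -T') (b := T')).exists_bound_of_continuousOn
    hBc.continuousOn
  set C' := C + 1 with hC'
  have hC0 : 0 ≤ C := le_trans (norm_nonneg (B 0))
    (hC 0 ⟨by linarith, by linarith⟩)
  have hC'pos : 0 < C' := by linarith
  -- pointwise bound
  have key : ∀ k x, ENNReal.ofReal (B |u k x|) ≤
      ENNReal.ofReal η * ENNReal.ofReal (A |u k x|)
      + ENNReal.ofReal η * ENNReal.ofReal (Astar |u k x|)
      + Set.indicator {x | δ/2 < |u k x|} (fun _ => ENNReal.ofReal C') x := by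
    intro k x
    set t := |u k x| with ht
    have htnn : 0 ≤ t := abs_nonneg _
    rcases lt_or_ge t δ with h | h
    · rcases eq_or_ne t 0 with h0 | h0
      · simp [h0, (hBzero 0).2 rfl]
      · have habs : |t| = t := abs_of_nonneg htnn
        have := @hδ t (by simpa [Set.mem_compl_iff] using h0)
          (by simpa [Real.dist_eq, habs] using h)
        rw [Real.dist_eq, sub_zero] at this
        have hApos : 0 < A t := lt_of_le_of_ne (hAnn t) (fun hc => h0 ((hAzero t).1 hc.symm))
        have hBA : B t ≤ η * A t := by
          have h2 : B t / A t < η := lt_of_abs_lt this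
          calc B t = (B t / A t) * A t := by field_simp
          _ ≤ η * A t := mul_le_mul_of_nonneg_right h2.le (hAnn t)
        calc ENNReal.ofReal (B t) ≤ ENNReal.ofReal (η * A t) := ENNReal.ofReal_le_ofReal hBA
          _ = ENNReal.ofReal η * ENNReal.ofReal (A t) := ENNReal.ofReal_mul hηpos.le
          _ ≤ _ := le_add_of_le_of_nonneg (le_add_of_le_of_nonneg le_rfl zero_le) zero_le
    · rcases le_or_gt T' t with h2 | h2
      · have habs : |t| = t := abs_of_nonneg htnn
        have ht0 : t ≠ 0 := by intro hc; rw [hc] at h2; linarith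
        have := hT t (le_trans (le_max_left _ _) h2) t habs
        rw [Real.dist_eq, sub_zero] at this
        have hAspos : 0 < Astar t :=
          lt_of_le_of_ne (hAstarnn t) (fun hc => ht0 ((hAstarzero t).1 hc.symm))
        have hBA : B t ≤ η * Astar t := by
          have h3 : B t / Astar t < η := lt_of_abs_lt this
          calc B t = (B t / Astar t) * Astar t := by field_simp
          _ ≤ η * Astar t := mul_le_mul_of_nonneg_right h3.le (hAstarnn t)
        calc ENNReal.ofReal (B t) ≤ ENNReal.ofReal (η * Astar t) :=
            ENNReal.ofReal_le_ofReal hBA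
          _ = ENNReal.ofReal η * ENNReal.ofReal (Astar t) := ENNReal.ofReal_mul hηpos.le
          _ ≤ _ := le_add_of_le_of_nonneg
            (le_add_of_nonneg_of_le zero_le le_rfl) zero_le
      · have hmem : x ∈ {x | δ/2 < |u k x|} := by
          simp only [Set.mem_setOf_eq, ← ht]; linarith
        have hBt : B t ≤ C' := by
          have := hC t ⟨by linarith, h2.le⟩
          rw [Real.norm_eq_abs, abs_of_nonneg (hBnn t)] at this
          linarith
        calc ENNReal.ofReal (B t) ≤ ENNReal.ofReal C' := ENNReal.ofReal_le_ofReal hBt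
          _ = Set.indicator {x | δ/2 < |u k x|} (fun _ => ENNReal.ofReal C') x := by
            rw [Set.indicator_of_mem hmem]
          _ ≤ _ := le_add_of_nonneg_of_le zero_le le_rfl
  -- measurability helpers
  have hmA : ∀ k, Measurable fun x => ENNReal.ofReal (A |u k x|) := fun k =>
    ENNReal.measurable_ofReal.comp (hAc.measurable.comp (hum k).abs)
  have hmAs : ∀ k, Measurable fun x => ENNReal.ofReal (Astar |u k x|) := fun k =>
    ENNReal.measurable_ofReal.comp (hAstarc.measurable.comp (hum k).abs)
  have hmV : ∀ k, MeasurableSet {x | δ/2 < |u k x|} := fun k =>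
    measurableSet_lt measurable_const (hum k).abs
  -- integral bound
  have hint : ∀ k, (∫⁻ x, ENNReal.ofReal (B |u k x|)) ≤
      ENNReal.ofReal (r/3) + ENNReal.ofReal (r/3)
      + ENNReal.ofReal C' * volume {x | δ/2 < |u k x|} := by
    intro k
    calc (∫⁻ x, ENNReal.ofReal (B |u k x|))
        ≤ ∫⁻ x, (ENNReal.ofReal η * ENNReal.ofReal (A |u k x|)
          + ENNReal.ofReal η * ENNReal.ofReal (Astar |u k x|)
          + Set.indicator {x | δ/2 < |u k x|} (fun _ => ENNReal.ofReal C') x) :=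
        lintegral_mono (key k)
      _ = (∫⁻ x, ENNReal.ofReal η * ENNReal.ofReal (A |u k x|))
          + (∫⁻ x, ENNReal.ofReal η * ENNReal.ofReal (Astar |u k x|))
          + ∫⁻ x, Set.indicator {x | δ/2 < |u k x|} (fun _ => ENNReal.ofReal C') x := by
        rw [lintegral_add_right _ ((measurable_const.indicator (hmV k)))]
        rw [lintegral_add_right _ ((hmAs k).const_mul _)]
      _ = ENNReal.ofReal η * (∫⁻ x, ENNReal.ofReal (A |u k x|))
          + ENNReal.ofReal η * (∫⁻ x, ENNReal.ofReal (Astar |u k x|))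
          + ENNReal.ofReal C' * volume {x | δ/2 < |u k x|} := by
        rw [lintegral_const_mul _ (hmA k), lintegral_const_mul _ (hmAs k),
          lintegral_indicator_const (hmV k)]
      _ ≤ ENNReal.ofReal η * ENNReal.ofReal M + ENNReal.ofReal η * ENNReal.ofReal M
          + ENNReal.ofReal C' * volume {x | δ/2 < |u k x|} := by
        gcongr
        · exact (hbd₁ k).trans (ENNReal.ofReal_le_ofReal (le_max_left _ _))
        · exact (hbd₂ k).trans (ENNReal.ofReal_le_ofReal
            (le_max_of_le_right (le_max_left _ _)))
      _ = ENNReal.ofReal (r/3) + ENNReal.ofReal (r/3)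
          + ENNReal.ofReal C' * volume {x | δ/2 < |u k x|} := by
        rw [← ENNReal.ofReal_mul hηpos.le]
        congr 2 <;> · congr 1; rw [hη]; field_simp
  -- the measure of the bad set is eventually small
  have hsmall : ∀ᶠ k in atTop,
      volume {x | δ/2 < |u k x|} ≤ ENNReal.ofReal (r / (3 * C')) := by
    have hpos : (0:ENNReal) < ENNReal.ofReal (r / (3 * C')) := by
      rw [ENNReal.ofReal_pos]; positivity
    have := (hmeas (δ/2) (by linarith)).eventually_le_const hpos
    exact this
  filter_upwards [hsmall] with k hk
  calc (∫⁻ x, ENNReal.ofReal (B |u k x|))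
      ≤ ENNReal.ofReal (r/3) + ENNReal.ofReal (r/3)
        + ENNReal.ofReal C' * volume {x | δ/2 < |u k x|} := hint k
    _ ≤ ENNReal.ofReal (r/3) + ENNReal.ofReal (r/3)
        + ENNReal.ofReal C' * ENNReal.ofReal (r / (3 * C')) := by gcongr
    _ = ENNReal.ofReal r := by
      rw [← ENNReal.ofReal_mul hC'pos.le, ← ENNReal.ofReal_add (by positivity) (by positivity),
        ← ENNReal.ofReal_add (by positivity) (by positivity)]
      congr 1
      field_simp
      ring
    _ ≤ ε := hrε
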